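/- Let F : ℝⁿ → ℝⁿ satisfy h(‖x−y‖) ≤ ⟨x−y, F(x)−F(y)⟩ for all x, y ≥ 0, where h : ℝ⁺ → ℝ with h(0)=0 and h restricted to [0,ε) is an increasing bijection onto [0,η). Suppose x* ≥ 0 solves the NCP (x* ≥ 0, F(x*) ≥ 0, ⟨x*, F(x*)⟩ = 0) and x⁽ʳ⁾ ≥ 0 satisfies F(x⁽ʳ⁾) ≥ 0 and x⁽ʳ⁾_i·F_i(x⁽ʳ⁾) ≤ r² for all i. Then for r with nr² < η, ‖x* − x⁽ʳ⁾‖ ≤ h⁻¹(n r²). -/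

import Mathlib

open Finset

set_option maxHeartbeats 1000000 in
/-- Error estimate: if `h(‖x-y‖) ≤ ⟨x-y, F x - F y⟩` for `x, y ≥ 0`, `x*` solves the NCP and
`x⁽ʳ⁾ ≥ 0` satisfies `F(x⁽ʳ⁾) ≥ 0` and `x⁽ʳ⁾_i F_i(x⁽ʳ⁾) ≤ r²`, then for `n r² < η`,
`‖x* - x⁽ʳ⁾‖ ≤ h⁻¹(n r²)`. -/
theorem stmt_19 {n : ℕ} (F : EuclideanSpace ℝ (Fin n) → EuclideanSpace ℝ (Fin n))
    (h hinv : ℝ → ℝ) (ε η : ℝ) (hε : 0 < ε) (hη : 0 < η)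
    (hh0 : h 0 = 0)
    (hcond : ∀ x y : EuclideanSpace ℝ (Fin n), (∀ i, 0 ≤ x i) → (∀ i, 0 ≤ y i) →
      h ‖x - y‖ ≤ ∑ i, (x i - y i) * (F x i - F y i))
    (hmono : StrictMonoOn h (Set.Ico 0 ε))
    (hmaps : Set.MapsTo h (Set.Ico 0 ε) (Set.Ico 0 η))
    (hsurj : Set.SurjOn h (Set.Ico 0 ε) (Set.Ico 0 η))
    (hleftinv : ∀ u ∈ Set.Ico (0:ℝ) ε, hinv (h u) = u)
    (hinvmono : MonotoneOn hinv (Set.Ico 0 η))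
    (xs xr : EuclideanSpace ℝ (Fin n))
    (hxs : ∀ i, 0 ≤ xs i) (hFxs : ∀ i, 0 ≤ F xs i)
    (hcomp : ∑ i, xs i * F xs i = 0)
    (hxr : ∀ i, 0 ≤ xr i) (hFxr : ∀ i, 0 ≤ F xr i)
    (r : ℝ) (hr : 0 < r) (hri : ∀ i, xr i * F xr i ≤ r ^ 2)
    (hrsmall : (n : ℝ) * r ^ 2 < η) :
    ‖xs - xr‖ ≤ hinv ((n : ℝ) * r ^ 2) := by
  set d := ‖xs - xr‖ with hdDef
  have hd0 : 0 ≤ d := norm_nonneg _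
  have hnr0 : 0 ≤ (n : ℝ) * r ^ 2 := by positivity
  have hnrmem : (n : ℝ) * r ^ 2 ∈ Set.Ico (0:ℝ) η := ⟨hnr0, hrsmall⟩
  have hhnn : ∀ v ∈ Set.Ico (0:ℝ) ε, 0 ≤ h v := by
    intro v hv
    rcases eq_or_lt_of_le hv.1 with hv0 | hv0
    · rw [← hv0, hh0]
    · have := hmono ⟨le_refl 0, hε⟩ hv hv0
      linarith [hh0]
  -- the sum S ≤ n r²
  have hS : ∑ i, (xs i - xr i) * (F xs i - F xr i) ≤ (n : ℝ) * r ^ 2 := by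
    have hexp : ∑ i, (xs i - xr i) * (F xs i - F xr i)
        = (∑ i, xs i * F xs i) - (∑ i, xs i * F xr i) - (∑ i, xr i * F xs i)
          + ∑ i, xr i * F xr i := by
      rw [← Finset.sum_sub_distrib, ← Finset.sum_sub_distrib, ← Finset.sum_add_distrib]
      exact Finset.sum_congr rfl (fun i _ => by ring)
    have h1 : 0 ≤ ∑ i, xs i * F xr i :=
      Finset.sum_nonneg fun i _ => mul_nonneg (hxs i) (hFxr i)
    have h2 : 0 ≤ ∑ i, xr i * F xs i :=
      Finset.sum_nonneg fun i _ => mul_nonneg (hxr i) (hFxs i)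
    have h3 : ∑ i, xr i * F xr i ≤ (n : ℝ) * r ^ 2 := by
      calc ∑ i, xr i * F xr i ≤ ∑ _i : Fin n, r ^ 2 :=
            Finset.sum_le_sum fun i _ => hri i
        _ = (n : ℝ) * r ^ 2 := by simp [Finset.sum_const, mul_comm]
    rw [hexp, hcomp]
    linarith
  by_cases hcase : d < ε
  · -- easy case
    have hdmem : d ∈ Set.Ico (0:ℝ) ε := ⟨hd0, hcase⟩
    have hhd : h d ≤ (n : ℝ) * r ^ 2 := le_trans (hcond xs xr hxs hxr) hS
    have := hinvmono (hmaps hdmem) hnrmem hhd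
    rw [hleftinv d hdmem] at this
    exact this
  · -- hard case : ε ≤ d, derive contradiction
    exfalso
    push_neg at hcase
    have hdpos : 0 < d := lt_of_lt_of_le hε hcase
    obtain ⟨u, humem, hu⟩ := hsurj hnrmem
    set d₁ : ℝ := (u + ε) / 2 with hd1Def
    have hud1 : u < d₁ := by simp only [hd1Def]; linarith [humem.2]
    have hd1ε : d₁ < ε := by simp only [hd1Def]; linarith [humem.2]
    have hd10 : 0 < d₁ := lt_of_le_of_lt humem.1 hud1
    set t : ℝ := d₁ / d with htDef
    have ht0 : 0 < t := div_pos hd10 hdpos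
    have ht1 : t < 1 := (div_lt_one hdpos).2 (lt_of_lt_of_le hd1ε hcase)
    have htd : t * d = d₁ := by rw [htDef]; field_simp
    -- the segment
    set z : ℝ → EuclideanSpace ℝ (Fin n) := fun s => xr + s • (xs - xr) with hzDef
    have hzi : ∀ s i, z s i = xr i + s * (xs i - xr i) := by
      intro s i
      simp [hzDef, PiLp.add_apply, PiLp.smul_apply, PiLp.sub_apply, smul_eq_mul]
    have hznn : ∀ s, 0 ≤ s → s ≤ 1 → ∀ i, 0 ≤ z s i := by
      intro s hs0 hs1 i
      rw [hzi]
      nlinarith [hxr i, hxs i]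
    have hzsub : ∀ s s' : ℝ, z s' - z s = (s' - s) • (xs - xr) := by
      intro s s'
      ext i
      simp only [PiLp.sub_apply, PiLp.smul_apply, smul_eq_mul, hzi]
      ring
    have hznorm : ∀ s s' : ℝ, s ≤ s' → ‖z s' - z s‖ = (s' - s) * d := by
      intro s s' hss
      rw [hzsub, norm_smul, Real.norm_eq_abs, abs_of_nonneg (by linarith)]
    set g : ℝ → ℝ := fun s => ∑ i, (xs i - xr i) * F (z s) i with hgDef
    -- local step
    have step : ∀ s s' : ℝ, 0 ≤ s → s ≤ s' → s' ≤ 1 → (s' - s) * d < ε → g s ≤ g s' := by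
      intro s s' hs0 hss hs1 hsmall
      rcases eq_or_lt_of_le hss with rfl | hlt
      · exact le_refl _
      have hc := hcond (z s') (z s) (hznn s' (by linarith) hs1) (hznn s hs0 (by linarith))
      rw [hznorm s s' hss] at hc
      have hrhs : ∑ i, (z s' i - z s i) * (F (z s') i - F (z s) i)
          = (s' - s) * (g s' - g s) := by
        simp only [hgDef, mul_sub, Finset.mul_sum, ← Finset.sum_sub_distrib]
        refine Finset.sum_congr rfl (fun i _ => ?_)
        rw [hzi, hzi]
        ring
      rw [hrhs] at hc
      have hnn : 0 ≤ h ((s' - s) * d) :=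
        hhnn _ ⟨mul_nonneg (by linarith) hd0, hsmall⟩
      nlinarith
    -- chaining
    have chain : ∀ a b : ℝ, 0 ≤ a → a ≤ b → b ≤ 1 → g a ≤ g b := by
      intro a b ha hab hb1
      obtain ⟨N, hN⟩ := exists_nat_gt (d / ε)
      have hNpos : 0 < (N : ℝ) := lt_of_le_of_lt (by positivity) hN
      have hstepsz : (b - a) / N * d < ε := by
        have hdN : d / N < ε := by
          rw [div_lt_iff₀ hNpos]
          nlinarith [(div_lt_iff₀ hε).1 hN]
        have h1 : (b - a) / N * d ≤ d / N := by
          rw [div_mul_eq_mul_div]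
          gcongr
          nlinarith
        linarith
      have hδ0 : 0 ≤ (b - a) / N := div_nonneg (by linarith) hNpos.le
      have key : ∀ j : ℕ, j ≤ N → g a ≤ g (a + j * ((b - a) / N)) := by
        intro j
        induction j with
        | zero => intro _; simp
        | succ k ih =>
          intro hk
          have hk' : k ≤ N := Nat.le_of_succ_le hk
          refine (ih hk').trans (step _ _ ?_ ?_ ?_ ?_)
          · have := mul_nonneg (Nat.cast_nonneg (α := ℝ) k) hδ0
            linarith
          · push_cast; nlinarith [hδ0]
          · have hkN : ((k : ℝ) + 1) ≤ N := by exact_mod_cast hk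
            have : a + ((k : ℝ) + 1) * ((b - a) / N) ≤ a + N * ((b - a) / N) := by
              nlinarith
            push_cast
            calc a + ((k : ℝ) + 1) * ((b - a) / N) ≤ a + N * ((b - a) / N) := this
              _ = b := by field_simp; ring
              _ ≤ 1 := hb1
          · push_cast
            have : (a + ((k : ℝ) + 1) * ((b - a) / N)) - (a + k * ((b - a) / N))
                = (b - a) / N := by ring
            rw [this]
            exact hstepsz
      have := key N (le_refl N)
      have hb : a + (N : ℝ) * ((b - a) / N) = b := by field_simp; ring
      rwa [hb] at this
    -- endpoints
    have hz0 : z 0 = xr := by ext i; rw [hzi]; ring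
    have hz1 : z 1 = xs := by ext i; rw [hzi]; ring
    have hS' : g 1 - g 0 ≤ (n : ℝ) * r ^ 2 := by
      have : g 1 - g 0 = ∑ i, (xs i - xr i) * (F xs i - F xr i) := by
        simp only [hgDef, hz0, hz1, mul_sub, Finset.sum_sub_distrib]
      linarith [hS]
    have hg01 : g 0 ≤ g 1 := chain 0 1 le_rfl zero_le_one le_rfl
    have hgt1 : g t ≤ g 1 := chain t 1 ht0.le ht1.le le_rfl
    -- the key inequality at the intermediate point
    have hc := hcond (z t) (z 0) (hznn t ht0.le ht1.le) (hznn 0 le_rfl zero_le_one)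
    rw [hznorm 0 t ht0.le] at hc
    have hrhs : ∑ i, (z t i - z 0 i) * (F (z t) i - F (z 0) i)
        = t * (g t - g 0) := by
      simp only [hgDef, mul_sub, Finset.mul_sum, ← Finset.sum_sub_distrib]
      refine Finset.sum_congr rfl (fun i _ => ?_)
      rw [hzi, hzi]
      ring
    rw [hrhs] at hc
    simp only [sub_zero, htd] at hc
    -- h d₁ ≤ t * (g t - g 0) ≤ t * (g 1 - g 0) ≤ g 1 - g 0 ≤ n r² = h u < h d₁
    have hud : h u < h d₁ := hmono ⟨humem.1, lt_trans hud1 hd1ε⟩ ⟨hd10.le, hd1ε⟩ hud1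
    nlinarith
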